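/- Let π* ∈ Π(μ,ν) minimize the sum of the top k eigenvalues of V_π, let f_t(x,y) = (1−t)x + ty, and μ_t = (f_t)_#π*. Then for all s, t ∈ [0,1], S_k(μ_s, μ_t) = |t − s| · S_k(μ,ν); in particular t ↦ μ_t is a constant-speed geodesic in (P₂(ℝ^d), S_k). -/

import Mathlib

noncomputable section
open MeasureTheory Matrix

abbrev Ed (d : ℕ) := EuclideanSpace ℝ (Fin d)

def couplings {d : ℕ} (μ ν : Measure (Ed d)) : Set (Measure (Ed d × Ed d)) :=
  {π | IsProbabilityMeasure π ∧ π.map Prod.fst = μ ∧ π.map Prod.snd = ν}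

def transportCost {d : ℕ} (π : Measure (Ed d × Ed d)) : ℝ :=
  ∫ p, ‖p.1 - p.2‖ ^ 2 ∂π

/-- Squared 2-Wasserstein distance. -/
def W2sq {d : ℕ} (μ ν : Measure (Ed d)) : ℝ :=
  sInf (transportCost '' couplings μ ν)

/-- Second-order displacement matrix `V_π = ∫ (x−y)(x−y)ᵀ dπ`, entrywise. -/
def Vpi {d : ℕ} (π : Measure (Ed d × Ed d)) : Matrix (Fin d) (Fin d) ℝ :=
  Matrix.of fun i j => ∫ p, (p.1 i - p.2 i) * (p.1 j - p.2 j) ∂π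

lemma Vpi_isHermitian {d : ℕ} (π : Measure (Ed d × Ed d)) : (Vpi π).IsHermitian := by
  unfold Matrix.IsHermitian
  ext i j
  simp [Vpi, Matrix.conjTranspose_apply, mul_comm]

/-- Eigenvalues in decreasing order: `eigDesc V h i` is the `(i+1)`-th largest eigenvalue. -/
def eigDesc {d : ℕ} (V : Matrix (Fin d) (Fin d) ℝ) (h : V.IsHermitian) : Fin d → ℝ :=
  fun i => h.eigenvalues (Tuple.sort h.eigenvalues i.rev)

/-- Sum of the `k` largest eigenvalues. -/
def topEigSum {d : ℕ} (k : ℕ) (V : Matrix (Fin d) (Fin d) ℝ) (h : V.IsHermitian) : ℝ :=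
  ∑ i ∈ Finset.univ.filter (fun i : Fin d => (i : ℕ) < k), eigDesc V h i

/-- Squared subspace robust Wasserstein distance:
`S_k²(μ,ν) = inf_{π ∈ Π(μ,ν)} Σ_{l=1}^k λ_l(V_π)`. -/
def SRWsq {d : ℕ} (k : ℕ) (μ ν : Measure (Ed d)) : ℝ :=
  sInf ((fun π => topEigSum k (Vpi π) (Vpi_isHermitian π)) '' couplings μ ν)

open ProbabilityTheory

abbrev E2 (d : ℕ) := Ed d × Ed d
variable {d : ℕ}

lemma continuous_coord (i : Fin d) : Continuous fun x : Ed d => x i :=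
  (EuclideanSpace.proj (𝕜 := ℝ) i).continuous

lemma glue_marg_fst (γ : Measure (E2 d)) [IsProbabilityMeasure γ]
    (κ₁ κ₂ : Kernel (Ed d) (E2 d)) [IsMarkovKernel κ₁] [IsMarkovKernel κ₂] :
    (γ ⊗ₘ ((κ₁.comap Prod.fst measurable_fst) ×ₖ (κ₂.comap Prod.snd measurable_snd))).map
        (fun ω : E2 d × (E2 d × E2 d) => (ω.1.1, ω.2.1)) = γ.fst ⊗ₘ κ₁ := by
  set κ := (κ₁.comap Prod.fst measurable_fst) ×ₖ (κ₂.comap Prod.snd measurable_snd) with hκdef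
  ext s hs
  rw [Measure.map_apply (by fun_prop) hs, Measure.compProd_apply hs,
    Measure.compProd_apply ((by fun_prop : Measurable
      (fun ω : E2 d × (E2 d × E2 d) => (ω.1.1, ω.2.1))) hs)]
  have hκ : ∀ uv : E2 d,
      κ uv (Prod.mk uv ⁻¹' ((fun ω : E2 d × (E2 d × E2 d) => (ω.1.1, ω.2.1)) ⁻¹' s))
        = κ₁ uv.1 (Prod.mk uv.1 ⁻¹' s) := by
    intro uv
    rw [hκdef, Kernel.prod_apply, Kernel.comap_apply, Kernel.comap_apply]
    have e : Prod.mk uv ⁻¹' ((fun ω : E2 d × (E2 d × E2 d) => (ω.1.1, ω.2.1)) ⁻¹' s)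
        = (Prod.mk uv.1 ⁻¹' s) ×ˢ (Set.univ : Set (E2 d)) := by
      ext pq
      simp [Set.mem_prod]
    rw [e, Measure.prod_prod, measure_univ, mul_one]
  simp_rw [hκ]
  rw [Measure.fst, lintegral_map (Kernel.measurable_kernel_prodMk_left hs) measurable_fst]

lemma glue_marg_snd (γ : Measure (E2 d)) [IsProbabilityMeasure γ]
    (κ₁ κ₂ : Kernel (Ed d) (E2 d)) [IsMarkovKernel κ₁] [IsMarkovKernel κ₂] :
    (γ ⊗ₘ ((κ₁.comap Prod.fst measurable_fst) ×ₖ (κ₂.comap Prod.snd measurable_snd))).map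
        (fun ω : E2 d × (E2 d × E2 d) => (ω.1.2, ω.2.2)) = γ.snd ⊗ₘ κ₂ := by
  set κ := (κ₁.comap Prod.fst measurable_fst) ×ₖ (κ₂.comap Prod.snd measurable_snd) with hκdef
  ext s hs
  rw [Measure.map_apply (by fun_prop) hs, Measure.compProd_apply hs,
    Measure.compProd_apply ((by fun_prop : Measurable
      (fun ω : E2 d × (E2 d × E2 d) => (ω.1.2, ω.2.2))) hs)]
  have hκ : ∀ uv : E2 d,
      κ uv (Prod.mk uv ⁻¹' ((fun ω : E2 d × (E2 d × E2 d) => (ω.1.2, ω.2.2)) ⁻¹' s))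
        = κ₂ uv.2 (Prod.mk uv.2 ⁻¹' s) := by
    intro uv
    rw [hκdef, Kernel.prod_apply, Kernel.comap_apply, Kernel.comap_apply]
    have e : Prod.mk uv ⁻¹' ((fun ω : E2 d × (E2 d × E2 d) => (ω.1.2, ω.2.2)) ⁻¹' s)
        = (Set.univ : Set (E2 d)) ×ˢ (Prod.mk uv.2 ⁻¹' s) := by
      ext pq
      simp [Set.mem_prod]
    rw [e, Measure.prod_prod, measure_univ, one_mul]
  simp_rw [hκ]
  rw [Measure.snd, lintegral_map (Kernel.measurable_kernel_prodMk_left hs) measurable_snd]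

lemma coord_sq_le_norm_sq (x : Ed d) (i : Fin d) : x i ^ 2 ≤ ‖x‖ ^ 2 := by
  rw [EuclideanSpace.norm_eq, Real.sq_sqrt (by positivity)]
  have h := Finset.single_le_sum (f := fun j => ‖x j‖ ^ 2)
    (fun j _ => by positivity) (Finset.mem_univ i)
  simpa [Real.norm_eq_abs, sq_abs] using h

lemma memL2_coord_fst (π : Measure (E2 d)) [IsProbabilityMeasure π] {μ : Measure (Ed d)}
    (hmap : π.map Prod.fst = μ) (hμ : Integrable (fun x => ‖x‖ ^ 2) μ) (i : Fin d) :
    MemLp (fun p : E2 d => p.1 i) 2 π := by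
  have h1 : Integrable (fun p : E2 d => ‖p.1‖ ^ 2) π := by
    rw [← hmap] at hμ
    exact (integrable_map_measure (by fun_prop : Continuous fun x : Ed d => ‖x‖ ^ 2).aestronglyMeasurable
      measurable_fst.aemeasurable).1 hμ
  refine (memLp_two_iff_integrable_sq
    (((continuous_coord i).comp continuous_fst).aestronglyMeasurable)).2 ?_
  refine h1.mono' (((continuous_coord i).comp continuous_fst).aestronglyMeasurable.pow 2) ?_
  filter_upwards with p
  rw [Real.norm_eq_abs, abs_pow, sq_abs]
  exact coord_sq_le_norm_sq _ _

lemma memL2_coord_snd (π : Measure (E2 d)) [IsProbabilityMeasure π] {ν : Measure (Ed d)}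
    (hmap : π.map Prod.snd = ν) (hν : Integrable (fun x => ‖x‖ ^ 2) ν) (i : Fin d) :
    MemLp (fun p : E2 d => p.2 i) 2 π := by
  have h1 : Integrable (fun p : E2 d => ‖p.2‖ ^ 2) π := by
    rw [← hmap] at hν
    exact (integrable_map_measure (by fun_prop : Continuous fun x : Ed d => ‖x‖ ^ 2).aestronglyMeasurable
      measurable_snd.aemeasurable).1 hν
  refine (memLp_two_iff_integrable_sq
    (((continuous_coord i).comp continuous_snd).aestronglyMeasurable)).2 ?_
  refine h1.mono' (((continuous_coord i).comp continuous_snd).aestronglyMeasurable.pow 2) ?_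
  filter_upwards with p
  rw [Real.norm_eq_abs, abs_pow, sq_abs]
  exact coord_sq_le_norm_sq _ _

lemma second_moment_interp (π : Measure (E2 d)) [IsProbabilityMeasure π]
    {μ ν : Measure (Ed d)} (h1 : π.map Prod.fst = μ) (h2 : π.map Prod.snd = ν)
    (hμ : Integrable (fun x => ‖x‖ ^ 2) μ) (hν : Integrable (fun x => ‖x‖ ^ 2) ν)
    {s : ℝ} (hs : s ∈ Set.Icc (0:ℝ) 1) :
    Integrable (fun x => ‖x‖ ^ 2) (π.map (fun p : E2 d => (1 - s) • p.1 + s • p.2)) := by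
  have hf : Measurable (fun p : E2 d => (1 - s) • p.1 + s • p.2) := by fun_prop
  rw [integrable_map_measure (by fun_prop : Continuous fun x : Ed d => ‖x‖ ^ 2).aestronglyMeasurable
    hf.aemeasurable]
  have hμ' : Integrable (fun p : E2 d => ‖p.1‖ ^ 2) π := by
    rw [← h1] at hμ
    exact (integrable_map_measure (by fun_prop : Continuous fun x : Ed d => ‖x‖ ^ 2).aestronglyMeasurable
      measurable_fst.aemeasurable).1 hμ
  have hν' : Integrable (fun p : E2 d => ‖p.2‖ ^ 2) π := by
    rw [← h2] at hν
    exact (integrable_map_measure (by fun_prop : Continuous fun x : Ed d => ‖x‖ ^ 2).aestronglyMeasurable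
      measurable_snd.aemeasurable).1 hν
  have hint : Integrable (fun p : E2 d => 2 * ‖p.1‖ ^ 2 + 2 * ‖p.2‖ ^ 2) π :=
    (hμ'.const_mul 2).add (hν'.const_mul 2)
  refine hint.mono' (by fun_prop :
    Continuous fun p : E2 d => ‖(1 - s) • p.1 + s • p.2‖ ^ 2).aestronglyMeasurable ?_
  filter_upwards with p
  simp only [Function.comp_apply, Real.norm_eq_abs, abs_pow, sq_abs]
  have hb : ‖(1 - s) • p.1 + s • p.2‖ ≤ ‖p.1‖ + ‖p.2‖ := by
    refine (norm_add_le _ _).trans ?_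
    rw [norm_smul, norm_smul, Real.norm_eq_abs, Real.norm_eq_abs,
      abs_of_nonneg (by linarith [hs.2]), abs_of_nonneg hs.1]
    have h3 := norm_nonneg p.1
    have h4 := norm_nonneg p.2
    nlinarith [hs.1, hs.2]
  nlinarith [norm_nonneg ((1 - s) • p.1 + s • p.2), norm_nonneg p.1, norm_nonneg p.2,
    sq_nonneg (‖p.1‖ - ‖p.2‖), hb]

/-- Frobenius pairing. -/
def frob {d : ℕ} (Z V : Matrix (Fin d) (Fin d) ℝ) : ℝ := ∑ i, ∑ j, Z i j * V i j

lemma frob_smul {d : ℕ} (Z V : Matrix (Fin d) (Fin d) ℝ) (c : ℝ) :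
    frob Z (c • V) = c * frob Z V := by
  simp [frob, Finset.mul_sum, Matrix.smul_apply]
  ring_nf
  congr 1; ext i; congr 1; ext j; ring

lemma topEigSum_congr {d : ℕ} (k : ℕ) {V W : Matrix (Fin d) (Fin d) ℝ}
    (hV : V.IsHermitian) (hW : W.IsHermitian) (h : V = W) :
    topEigSum k V hV = topEigSum k W hW := by subst h; rfl

lemma eigDesc_antitone {d : ℕ} (V : Matrix (Fin d) (Fin d) ℝ) (h : V.IsHermitian) :
    Antitone (eigDesc V h) := by
  intro i j hij
  have := Tuple.monotone_sort h.eigenvalues (Fin.rev_le_rev.2 hij)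
  simpa [eigDesc] using this

lemma card_filter_lt {d k : ℕ} (hkd : k ≤ d) :
    (Finset.univ.filter (fun i : Fin d => (i : ℕ) < k)).card = k := by
  rw [Finset.card_filter]
  rw [Fin.sum_univ_eq_sum_range (fun i => if i < k then 1 else 0)]
  rw [← Finset.card_filter]
  have : (Finset.range d).filter (fun i => i < k) = Finset.range k := by
    ext i
    simp only [Finset.mem_filter, Finset.mem_range]
    exact ⟨fun h => h.2, fun h => ⟨lt_of_lt_of_le h hkd, h⟩⟩
  rw [this, Finset.card_range]

/-- combinatorial core of Ky Fan -/
lemma sum_mul_le_topk {d k : ℕ} (hk : 1 ≤ k) (hkd : k ≤ d)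
    (V : Matrix (Fin d) (Fin d) ℝ) (h : V.IsHermitian) (w : Fin d → ℝ)
    (h0 : ∀ i, 0 ≤ w i) (h1 : ∀ i, w i ≤ 1) (hsum : ∑ i, w i = k) :
    ∑ i, w i * h.eigenvalues i ≤ topEigSum k V h := by
  classical
  have hd : 0 < d := lt_of_lt_of_le hk hkd
  set τ : Equiv.Perm (Fin d) := (Fin.revPerm).trans (Tuple.sort h.eigenvalues) with hτ
  have hτ_apply : ∀ j, τ j = Tuple.sort h.eigenvalues j.rev := fun j => rfl
  set g : Fin d → ℝ := eigDesc V h with hg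
  have hgτ : ∀ j, h.eigenvalues (τ j) = g j := fun j => rfl
  set e : Fin d → ℝ := fun j => w (τ j) with he
  have hsum' : ∑ j, e j = (k : ℝ) := by
    rw [← hsum]; exact Equiv.sum_comp τ w
  have hre : ∑ i, w i * h.eigenvalues i = ∑ j, e j * g j := by
    rw [← Equiv.sum_comp τ (fun i => w i * h.eigenvalues i)]
    rfl
  rw [hre]
  set θ : ℝ := g ⟨k - 1, lt_of_lt_of_le (Nat.pred_lt (Nat.one_le_iff_ne_zero.1 hk)) hkd⟩ with hθ
  have key : ∀ j : Fin d, e j * (g j - θ) ≤ if (j : ℕ) < k then g j - θ else 0 := by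
    intro j
    by_cases hj : (j : ℕ) < k
    · simp only [hj, if_true]
      have hgj : θ ≤ g j := by
        apply eigDesc_antitone V h
        exact Fin.le_def.2 (by simp; omega)
      have he1 : e j = w (τ j) := rfl
      nlinarith [h0 (τ j), h1 (τ j)]
    · simp only [hj, if_false]
      have hgj : g j ≤ θ := by
        apply eigDesc_antitone V h
        exact Fin.le_def.2 (by simp; omega)
      have he1 : e j = w (τ j) := rfl
      nlinarith [h0 (τ j)]
  have h2 : ∑ j, e j * (g j - θ) ≤ ∑ j ∈ Finset.univ.filter (fun j : Fin d => (j : ℕ) < k), (g j - θ) := by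
    calc ∑ j, e j * (g j - θ) ≤ ∑ j : Fin d, (if (j : ℕ) < k then g j - θ else 0) :=
          Finset.sum_le_sum (fun j _ => key j)
      _ = _ := (Finset.sum_filter _ _).symm
  have h3 : ∑ j ∈ Finset.univ.filter (fun j : Fin d => (j : ℕ) < k), (g j - θ)
      = topEigSum k V h - k * θ := by
    rw [Finset.sum_sub_distrib, Finset.sum_const, card_filter_lt hkd]
    simp [topEigSum, hg, mul_comm]
  have expand : ∑ j, e j * g j = (∑ j, e j * (g j - θ)) + θ * ∑ j, e j := by
    rw [Finset.mul_sum, ← Finset.sum_add_distrib]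
    congr 1; ext j; ring
  rw [expand, hsum']
  have := le_trans h2 (le_of_eq h3)
  linarith

lemma matrix_sym_apply {d : ℕ} {V : Matrix (Fin d) (Fin d) ℝ} (hV : V.IsHermitian)
    (i j : Fin d) : V j i = V i j := by
  conv_lhs => rw [← hV]
  simp [Matrix.conjTranspose_apply]

lemma frob_eq_trace {d : ℕ} (Z V : Matrix (Fin d) (Fin d) ℝ) (hV : V.IsHermitian) :
    frob Z V = (Z * V).trace := by
  simp only [Matrix.trace, Matrix.diag, Matrix.mul_apply, frob]
  refine Finset.sum_congr rfl fun i _ => Finset.sum_congr rfl fun j _ => ?_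
  rw [matrix_sym_apply hV i j]

lemma psd_diag_nonneg {d : ℕ} {W : Matrix (Fin d) (Fin d) ℝ} (hW : W.PosSemidef)
    (i : Fin d) : 0 ≤ W i i := by
  exact hW.diag_nonneg (i := i)

lemma spectral_real {d : ℕ} {V : Matrix (Fin d) (Fin d) ℝ} (hV : V.IsHermitian) :
    V = (hV.eigenvectorUnitary : Matrix (Fin d) (Fin d) ℝ) * diagonal hV.eigenvalues *
      star (hV.eigenvectorUnitary : Matrix (Fin d) (Fin d) ℝ) := by
  have h2 := hV.spectral_theorem
  have e : diagonal (RCLike.ofReal ∘ hV.eigenvalues) = diagonal hV.eigenvalues := by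
    congr 1
  rw [e] at h2
  exact h2

lemma kyFan_upper {d k : ℕ} (hk : 1 ≤ k) (hkd : k ≤ d)
    {V Z : Matrix (Fin d) (Fin d) ℝ} (hV : V.IsHermitian)
    (hZ : Z.PosSemidef) (hZ1 : (1 - Z).PosSemidef) (hZtr : Z.trace = (k : ℝ)) :
    frob Z V ≤ topEigSum k V hV := by
  classical
  set U : Matrix (Fin d) (Fin d) ℝ := (hV.eigenvectorUnitary : Matrix (Fin d) (Fin d) ℝ) with hU
  have hsU : star U * U = 1 := Unitary.coe_star_mul_self _
  have hUs : U * star U = 1 := Unitary.coe_mul_star_self _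
  set W : Matrix (Fin d) (Fin d) ℝ := star U * Z * U with hW
  have hWpsd : W.PosSemidef := by
    have := hZ.conjTranspose_mul_mul_same U
    simpa [Matrix.star_eq_conjTranspose, hW] using this
  have hW1 : (1 - W).PosSemidef := by
    have h2 : star U * (1 - Z) * U = 1 - W := by
      rw [Matrix.mul_sub, Matrix.mul_one, Matrix.sub_mul, hsU, hW]
    have := hZ1.conjTranspose_mul_mul_same U
    rw [Matrix.star_eq_conjTranspose] at h2
    rw [h2] at this
    exact this
  have hWtr : ∑ i, W i i = (k : ℝ) := by
    have : W.trace = (k : ℝ) := by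
      rw [hW, Matrix.trace_mul_cycle, hUs, Matrix.one_mul, hZtr]
    simpa [Matrix.trace, Matrix.diag] using this
  have key : frob Z V = ∑ i, W i i * hV.eigenvalues i := by
    rw [frob_eq_trace _ _ hV]
    conv_lhs => rw [spectral_real hV]
    rw [← hU]
    have : Z * (U * diagonal hV.eigenvalues * star U) = Z * U * diagonal hV.eigenvalues * star U := by
      simp only [← Matrix.mul_assoc]
    rw [this, Matrix.trace_mul_comm, ← Matrix.mul_assoc, ← Matrix.mul_assoc, ← hW]
    simp [Matrix.trace, Matrix.diag, Matrix.mul_diagonal]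
  rw [key]
  exact sum_mul_le_topk hk hkd V hV (fun i => W i i) (fun i => psd_diag_nonneg hWpsd i)
    (fun i => by have := psd_diag_nonneg hW1 i; simp [Matrix.sub_apply] at this; linarith)
    hWtr

lemma kyFan_attained {d k : ℕ} (hk : 1 ≤ k) (hkd : k ≤ d)
    {V : Matrix (Fin d) (Fin d) ℝ} (hV : V.IsHermitian) :
    ∃ Z : Matrix (Fin d) (Fin d) ℝ, Z.PosSemidef ∧ (1 - Z).PosSemidef ∧
      Z.trace = (k : ℝ) ∧ frob Z V = topEigSum k V hV := by
  classical
  set U : Matrix (Fin d) (Fin d) ℝ := (hV.eigenvectorUnitary : Matrix (Fin d) (Fin d) ℝ) with hU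
  have hsU : star U * U = 1 := Unitary.coe_star_mul_self _
  have hUs : U * star U = 1 := Unitary.coe_mul_star_self _
  set τ : Equiv.Perm (Fin d) := (Fin.revPerm).trans (Tuple.sort hV.eigenvalues) with hτ
  set w : Fin d → ℝ := fun i => if ((τ.symm i : Fin d) : ℕ) < k then 1 else 0 with hw
  have hw0 : ∀ i, 0 ≤ w i := fun i => by rw [hw]; dsimp only; split <;> norm_num
  have hw1 : ∀ i, w i ≤ 1 := fun i => by rw [hw]; dsimp only; split <;> norm_num
  have hwτ : ∀ j, w (τ j) = if ((j : Fin d) : ℕ) < k then 1 else 0 := by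
    intro j; rw [hw]; simp
  refine ⟨U * diagonal w * star U, ?_, ?_, ?_, ?_⟩
  · have hD : (diagonal w).PosSemidef := Matrix.posSemidef_diagonal_iff.2 hw0
    have := hD.mul_mul_conjTranspose_same U
    simpa [Matrix.star_eq_conjTranspose] using this
  · have h1Z : 1 - U * diagonal w * star U = U * diagonal (fun i => 1 - w i) * star U := by
      have : diagonal (fun i => 1 - w i) = 1 - diagonal w := by
        rw [← Matrix.diagonal_one, ← Matrix.diagonal_sub]
      rw [this, Matrix.mul_sub, Matrix.sub_mul, Matrix.mul_one, hUs]
    rw [h1Z]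
    have hD : (diagonal (fun i => 1 - w i)).PosSemidef :=
      Matrix.posSemidef_diagonal_iff.2 (fun i => by have := hw1 i; linarith)
    have := hD.mul_mul_conjTranspose_same U
    simpa [Matrix.star_eq_conjTranspose] using this
  · rw [Matrix.trace_mul_cycle, hsU, Matrix.one_mul, Matrix.trace_diagonal]
    rw [← Equiv.sum_comp τ w]
    simp_rw [hwτ]
    rw [Finset.sum_boole, card_filter_lt hkd]
  · rw [frob_eq_trace _ _ hV]
    conv_lhs => rw [spectral_real hV, ← hU]
    have step : U * diagonal w * star U * (U * diagonal hV.eigenvalues * star U)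
        = U * (diagonal w * diagonal hV.eigenvalues) * star U := by
      calc U * diagonal w * star U * (U * diagonal hV.eigenvalues * star U)
          = U * diagonal w * (star U * U) * (diagonal hV.eigenvalues * star U) := by
            simp only [Matrix.mul_assoc]
        _ = U * (diagonal w * diagonal hV.eigenvalues) * star U := by
            rw [hsU, Matrix.mul_one]; simp only [Matrix.mul_assoc]
    rw [step, Matrix.trace_mul_cycle, hsU, Matrix.one_mul, Matrix.diagonal_mul_diagonal,
      Matrix.trace_diagonal]
    rw [← Equiv.sum_comp τ (fun i => w i * hV.eigenvalues i)]
    simp only [hwτ, ite_mul, one_mul, zero_mul]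
    rw [topEigSum, Finset.sum_filter]
    rfl

open scoped MatrixOrder in
def Matrix.PosSemidef.sqrt {d : ℕ} {Z : Matrix (Fin d) (Fin d) ℝ} (_hZ : Z.PosSemidef) :
    Matrix (Fin d) (Fin d) ℝ := CFC.sqrt Z

open scoped MatrixOrder in
lemma Matrix.PosSemidef.posSemidef_sqrt {d : ℕ} {Z : Matrix (Fin d) (Fin d) ℝ}
    (hZ : Z.PosSemidef) : hZ.sqrt.PosSemidef :=
  Matrix.nonneg_iff_posSemidef.mp (CFC.sqrt_nonneg Z)

open scoped MatrixOrder in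
lemma Matrix.PosSemidef.sqrt_mul_self {d : ℕ} {Z : Matrix (Fin d) (Fin d) ℝ}
    (hZ : Z.PosSemidef) : hZ.sqrt * hZ.sqrt = Z :=
  CFC.sqrt_mul_sqrt_self Z (Matrix.nonneg_iff_posSemidef.mpr hZ)

section Cov
variable {Ω : Type*} [MeasurableSpace Ω] (M : Measure Ω)

def covMat {d : ℕ} (M : Measure Ω) (X Y : Ω → Fin d → ℝ) : Matrix (Fin d) (Fin d) ℝ :=
  Matrix.of fun i j => ∫ ω, X ω i * Y ω j ∂M

def L2v {d : ℕ} (M : Measure Ω) (X : Ω → Fin d → ℝ) : Prop :=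
  ∀ i, MemLp (fun ω => X ω i) 2 M

lemma l2_mul_integrable {f g : Ω → ℝ} (hf : MemLp f 2 M) (hg : MemLp g 2 M) :
    Integrable (fun ω => f ω * g ω) M := by
  have h := (hf.integrable_sq.add hg.integrable_sq).div_const 2
  refine h.mono' (hf.1.mul hg.1) ?_
  filter_upwards with ω
  rw [Real.norm_eq_abs, abs_mul]
  simp only [Pi.add_apply]
  nlinarith [sq_nonneg (|f ω| - |g ω|), sq_abs (f ω), sq_abs (g ω), abs_nonneg (f ω),
    abs_nonneg (g ω)]

lemma integral_mul_le_sqrt {f g : Ω → ℝ} (hf : MemLp f 2 M) (hg : MemLp g 2 M) :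
    ∫ ω, f ω * g ω ∂M ≤ Real.sqrt (∫ ω, f ω * f ω ∂M) * Real.sqrt (∫ ω, g ω * g ω ∂M) := by
  set A := ∫ ω, g ω * g ω ∂M with hA'
  set B := ∫ ω, f ω * g ω ∂M with hB'
  set C := ∫ ω, f ω * f ω ∂M with hC'
  have hA : 0 ≤ A := integral_nonneg fun ω => mul_self_nonneg _
  have hC : 0 ≤ C := integral_nonneg fun ω => mul_self_nonneg _
  have hq : ∀ x : ℝ, 0 ≤ A * (x * x) + (2 * B) * x + C := by
    intro x
    have h1 : ∀ ω, (f ω + x * g ω) * (f ω + x * g ω)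
        = f ω * f ω + ((2 * x) * (f ω * g ω) + (x * x) * (g ω * g ω)) := fun ω => by ring
    have hint1 : Integrable (fun ω => (2 * x) * (f ω * g ω)) M :=
      (l2_mul_integrable M hf hg).const_mul _
    have hint2 : Integrable (fun ω => (x * x) * (g ω * g ω)) M :=
      (l2_mul_integrable M hg hg).const_mul _
    have hB : Integrable (fun ω => 2 * x * (f ω * g ω) + x * x * (g ω * g ω)) M :=
      hint1.add hint2
    have h2 : ∫ ω, (f ω + x * g ω) * (f ω + x * g ω) ∂M
        = C + (2 * B * x + A * (x * x)) := by
      simp_rw [h1]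
      rw [integral_add (l2_mul_integrable M hf hf) hB, integral_add hint1 hint2,
        integral_const_mul, integral_const_mul]
      ring
    have h3 : 0 ≤ ∫ ω, (f ω + x * g ω) * (f ω + x * g ω) ∂M :=
      integral_nonneg fun ω => mul_self_nonneg _
    rw [h2] at h3
    linarith
  have hd := discrim_le_zero hq
  rw [discrim] at hd
  have hB2 : B ^ 2 ≤ C * A := by nlinarith
  calc B ≤ |B| := le_abs_self B
    _ = Real.sqrt (B ^ 2) := (Real.sqrt_sq_eq_abs B).symm
    _ ≤ Real.sqrt (C * A) := Real.sqrt_le_sqrt hB2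
    _ = Real.sqrt C * Real.sqrt A := Real.sqrt_mul hC A

variable {d : ℕ}

lemma memℒp_mulVec {R : Matrix (Fin d) (Fin d) ℝ} {X : Ω → Fin d → ℝ}
    (hX : L2v M X) (i : Fin d) : MemLp (fun ω => R.mulVec (X ω) i) 2 M := by
  have h := memLp_finset_sum' (μ := M) Finset.univ
    (f := fun j => fun ω => R i j * X ω j) (fun j _ => (hX j).const_mul _)
  have e : (∑ j, fun ω => R i j * X ω j) = fun ω => ∑ j, R i j * X ω j := by
    ext ω; simp
  rw [e] at h
  have e2 : (fun ω => R.mulVec (X ω) i) = fun ω => ∑ j, R i j * X ω j := by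
    ext ω; rw [Matrix.mulVec, dotProduct]
  rw [e2]
  exact h

lemma frob_cov_rep {Z : Matrix (Fin d) (Fin d) ℝ} (hZ : Z.PosSemidef)
    {X Y : Ω → Fin d → ℝ} (hX : L2v M X) (hY : L2v M Y) :
    frob Z (covMat M X Y)
      = ∑ i, ∫ ω, (hZ.sqrt.mulVec (X ω) i) * (hZ.sqrt.mulVec (Y ω) i) ∂M := by
  classical
  set R := hZ.sqrt with hR
  have hRsym : ∀ i j, R j i = R i j := fun i j =>
    matrix_sym_apply hZ.posSemidef_sqrt.1 i j
  have hRR : ∀ j l, ∑ i, R i j * R i l = Z j l := by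
    intro j l
    have h1 : (R * R) j l = Z j l := by rw [hZ.sqrt_mul_self]
    rw [← h1, Matrix.mul_apply]
    exact Finset.sum_congr rfl fun i _ => by rw [hRsym i j]
  have hint : ∀ i j, Integrable (fun ω => X ω i * Y ω j) M := fun i j =>
    l2_mul_integrable M (hX i) (hY j)
  have step : ∀ i, ∫ ω, (R.mulVec (X ω) i) * (R.mulVec (Y ω) i) ∂M
      = ∑ j, ∑ l, R i j * R i l * ∫ ω, X ω j * Y ω l ∂M := by
    intro i
    have e1 : ∀ ω, (R.mulVec (X ω) i) * (R.mulVec (Y ω) i)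
        = ∑ j, ∑ l, R i j * R i l * (X ω j * Y ω l) := by
      intro ω
      rw [Matrix.mulVec, Matrix.mulVec, dotProduct, dotProduct,
        Finset.sum_mul_sum]
      exact Finset.sum_congr rfl fun j _ => Finset.sum_congr rfl fun l _ => by ring
    simp_rw [e1]
    rw [integral_finset_sum]
    · refine Finset.sum_congr rfl fun j _ => ?_
      rw [integral_finset_sum]
      · exact Finset.sum_congr rfl fun l _ => integral_const_mul _ _
      · exact fun l _ => (hint j l).const_mul _
    · intro j _
      exact integrable_finset_sum _ (fun l _ => (hint j l).const_mul _)
  have e2 : ∀ j l, Z j l * (covMat M X Y) j l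
      = ∑ i, R i j * R i l * ∫ ω, X ω j * Y ω l ∂M := by
    intro j l
    rw [← hRR j l, Finset.sum_mul]
    rfl
  calc frob Z (covMat M X Y) = ∑ j, ∑ l, ∑ i, R i j * R i l * ∫ ω, X ω j * Y ω l ∂M := by
        rw [frob]; exact Finset.sum_congr rfl fun j _ => Finset.sum_congr rfl fun l _ => e2 j l
    _ = ∑ j, ∑ i, ∑ l, R i j * R i l * ∫ ω, X ω j * Y ω l ∂M :=
        Finset.sum_congr rfl fun j _ => Finset.sum_comm
    _ = ∑ i, ∑ j, ∑ l, R i j * R i l * ∫ ω, X ω j * Y ω l ∂M := Finset.sum_comm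
    _ = ∑ i, ∫ ω, (R.mulVec (X ω) i) * (R.mulVec (Y ω) i) ∂M := by
        exact Finset.sum_congr rfl fun i _ => (step i).symm

lemma frob_cov_nonneg {Z : Matrix (Fin d) (Fin d) ℝ} (hZ : Z.PosSemidef)
    {X : Ω → Fin d → ℝ} (hX : L2v M X) : 0 ≤ frob Z (covMat M X X) := by
  rw [frob_cov_rep M hZ hX hX]
  exact Finset.sum_nonneg fun i _ => integral_nonneg fun ω => mul_self_nonneg _

lemma frob_cov_CS {Z : Matrix (Fin d) (Fin d) ℝ} (hZ : Z.PosSemidef)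
    {X Y : Ω → Fin d → ℝ} (hX : L2v M X) (hY : L2v M Y) :
    frob Z (covMat M X Y)
      ≤ Real.sqrt (frob Z (covMat M X X)) * Real.sqrt (frob Z (covMat M Y Y)) := by
  rw [frob_cov_rep M hZ hX hY, frob_cov_rep M hZ hX hX, frob_cov_rep M hZ hY hY]
  calc ∑ i, ∫ ω, (hZ.sqrt.mulVec (X ω) i) * (hZ.sqrt.mulVec (Y ω) i) ∂M
      ≤ ∑ i, Real.sqrt (∫ ω, (hZ.sqrt.mulVec (X ω) i) * (hZ.sqrt.mulVec (X ω) i) ∂M) *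
          Real.sqrt (∫ ω, (hZ.sqrt.mulVec (Y ω) i) * (hZ.sqrt.mulVec (Y ω) i) ∂M) :=
        Finset.sum_le_sum fun i _ =>
          integral_mul_le_sqrt M (memℒp_mulVec M hX i) (memℒp_mulVec M hY i)
    _ ≤ _ := Real.sum_sqrt_mul_sqrt_le _
        (fun i => integral_nonneg fun ω => mul_self_nonneg _)
        (fun i => integral_nonneg fun ω => mul_self_nonneg _)

lemma covMat_add_left {X Y W : Ω → Fin d → ℝ} (hX : L2v M X) (hY : L2v M Y) (hW : L2v M W) :
    covMat M (X + Y) W = covMat M X W + covMat M Y W := by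
  ext i j
  simp only [covMat, Matrix.of_apply, Matrix.add_apply]
  rw [← integral_add (l2_mul_integrable M (hX i) (hW j)) (l2_mul_integrable M (hY i) (hW j))]
  congr 1; ext ω; simp [Pi.add_apply]; ring

lemma covMat_add_right {X Y W : Ω → Fin d → ℝ} (hX : L2v M X) (hY : L2v M Y) (hW : L2v M W) :
    covMat M X (Y + W) = covMat M X Y + covMat M X W := by
  ext i j
  simp only [covMat, Matrix.of_apply, Matrix.add_apply]
  rw [← integral_add (l2_mul_integrable M (hX i) (hY j)) (l2_mul_integrable M (hX i) (hW j))]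
  congr 1; ext ω; simp [Pi.add_apply]; ring

lemma frob_add_right {Z A B : Matrix (Fin d) (Fin d) ℝ} :
    frob Z (A + B) = frob Z A + frob Z B := by
  simp only [frob, Matrix.add_apply, mul_add, Finset.sum_add_distrib]

lemma frob_cov_symm {Z : Matrix (Fin d) (Fin d) ℝ} (hZsym : Z.IsHermitian)
    (X Y : Ω → Fin d → ℝ) : frob Z (covMat M Y X) = frob Z (covMat M X Y) := by
  rw [frob, frob, Finset.sum_comm]
  refine Finset.sum_congr rfl fun j _ => Finset.sum_congr rfl fun i _ => ?_
  rw [matrix_sym_apply hZsym j i]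
  simp only [covMat, Matrix.of_apply]
  congr 1
  · congr 1; ext ω; ring

lemma frob_cov_minkowski {Z : Matrix (Fin d) (Fin d) ℝ} (hZ : Z.PosSemidef)
    {X Y : Ω → Fin d → ℝ} (hX : L2v M X) (hY : L2v M Y) :
    Real.sqrt (frob Z (covMat M (X + Y) (X + Y)))
      ≤ Real.sqrt (frob Z (covMat M X X)) + Real.sqrt (frob Z (covMat M Y Y)) := by
  set a := Real.sqrt (frob Z (covMat M X X)) with ha
  set b := Real.sqrt (frob Z (covMat M Y Y)) with hb
  have ha0 : 0 ≤ a := Real.sqrt_nonneg _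
  have hb0 : 0 ≤ b := Real.sqrt_nonneg _
  have hXY : L2v M (X + Y) := fun i => ((hX i).add (hY i) : )
  have key : frob Z (covMat M (X + Y) (X + Y)) ≤ (a + b) ^ 2 := by
    rw [covMat_add_left M hX hY hXY, frob_add_right,
      covMat_add_right M hX hX hY, covMat_add_right M hY hX hY,
      frob_add_right, frob_add_right]
    have h1 : frob Z (covMat M X X) = a ^ 2 := by
      rw [ha, Real.sq_sqrt (frob_cov_nonneg M hZ hX)]
    have h2 : frob Z (covMat M Y Y) = b ^ 2 := by
      rw [hb, Real.sq_sqrt (frob_cov_nonneg M hZ hY)]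
    have h3 : frob Z (covMat M X Y) ≤ a * b := frob_cov_CS M hZ hX hY
    have h4 : frob Z (covMat M Y X) ≤ a * b := by
      rw [frob_cov_symm M hZ.1 X Y]; exact h3
    nlinarith
  calc Real.sqrt (frob Z (covMat M (X + Y) (X + Y))) ≤ Real.sqrt ((a + b) ^ 2) :=
        Real.sqrt_le_sqrt key
    _ = a + b := by rw [Real.sqrt_sq (by linarith)]

end Cov

lemma cont_VpiIntegrand {d : ℕ} (i j : Fin d) :
    Continuous fun p : E2 d => (p.1 i - p.2 i) * (p.1 j - p.2 j) :=
  (((continuous_coord i).comp continuous_fst).sub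
    ((continuous_coord i).comp continuous_snd)).mul
    (((continuous_coord j).comp continuous_fst).sub
      ((continuous_coord j).comp continuous_snd))

lemma topEigSum_smul {d k : ℕ} (hk : 1 ≤ k) (hkd : k ≤ d) {V : Matrix (Fin d) (Fin d) ℝ}
    (hV : V.IsHermitian) {c : ℝ} (hc : 0 ≤ c) (hcV : (c • V).IsHermitian) :
    topEigSum k (c • V) hcV = c * topEigSum k V hV := by
  apply le_antisymm
  · obtain ⟨Z, h1, h2, h3, h4⟩ := kyFan_attained hk hkd hcV
    rw [← h4, frob_smul]
    exact mul_le_mul_of_nonneg_left (kyFan_upper hk hkd hV h1 h2 h3) hc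
  · obtain ⟨Z, h1, h2, h3, h4⟩ := kyFan_attained hk hkd hV
    rw [← h4, ← frob_smul]
    exact kyFan_upper hk hkd hcV h1 h2 h3

def Dfun (d : ℕ) : E2 d → Fin d → ℝ := fun p i => p.1 i - p.2 i

lemma Vpi_eq_covMat {d : ℕ} (π : Measure (E2 d)) : Vpi π = covMat π (Dfun d) (Dfun d) := rfl

lemma SRWsq_comm {d : ℕ} (k : ℕ) (α β : Measure (Ed d)) : SRWsq k α β = SRWsq k β α := by
  have hsub : ∀ (α β : Measure (Ed d)),
      ((fun π => topEigSum k (Vpi π) (Vpi_isHermitian π)) '' couplings α β)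
      ⊆ ((fun π => topEigSum k (Vpi π) (Vpi_isHermitian π)) '' couplings β α) := by
    rintro α β x ⟨π, ⟨hP, h1, h2⟩, rfl⟩
    haveI := hP
    have hVswap : Vpi (π.map Prod.swap) = Vpi π := by
      ext i j
      show (∫ p : E2 d, (p.1 i - p.2 i) * (p.1 j - p.2 j) ∂(π.map Prod.swap))
        = (∫ p : E2 d, (p.1 i - p.2 i) * (p.1 j - p.2 j) ∂π)
      rw [integral_map measurable_swap.aemeasurable
        ((cont_VpiIntegrand i j).aestronglyMeasurable)]
      refine integral_congr_ae (Filter.Eventually.of_forall fun p => ?_)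
      show (p.2 i - p.1 i) * (p.2 j - p.1 j) = (p.1 i - p.2 i) * (p.1 j - p.2 j)
      ring
    refine ⟨π.map Prod.swap,
      ⟨Measure.isProbabilityMeasure_map measurable_swap.aemeasurable, ?_, ?_⟩, ?_⟩
    · rw [Measure.map_map measurable_fst measurable_swap]; exact h2
    · rw [Measure.map_map measurable_snd measurable_swap]; exact h1
    · exact topEigSum_congr k _ _ hVswap
  rw [SRWsq, SRWsq, Set.Subset.antisymm (hsub α β) (hsub β α)]

lemma Vpi_interp {d : ℕ} (π : Measure (E2 d)) [IsProbabilityMeasure π] (s t : ℝ) :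
    Vpi (π.map (fun p : E2 d => ((1 - s) • p.1 + s • p.2, (1 - t) • p.1 + t • p.2)))
      = ((t - s) ^ 2) • Vpi π := by
  ext i j
  show (∫ p : E2 d, (p.1 i - p.2 i) * (p.1 j - p.2 j)
      ∂(π.map (fun p : E2 d => ((1 - s) • p.1 + s • p.2, (1 - t) • p.1 + t • p.2))))
    = (t - s) ^ 2 * (∫ p : E2 d, (p.1 i - p.2 i) * (p.1 j - p.2 j) ∂π)
  rw [integral_map (by fun_prop : Measurable fun p : E2 d =>
      ((1 - s) • p.1 + s • p.2, (1 - t) • p.1 + t • p.2)).aemeasurable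
    ((cont_VpiIntegrand i j).aestronglyMeasurable)]
  have e : ∀ p : E2 d,
      ((((1 - s) • p.1 + s • p.2 : Ed d) i - ((1 - t) • p.1 + t • p.2 : Ed d) i) *
        (((1 - s) • p.1 + s • p.2 : Ed d) j - ((1 - t) • p.1 + t • p.2 : Ed d) j))
      = (t - s) ^ 2 * ((p.1 i - p.2 i) * (p.1 j - p.2 j)) := by
    intro p
    show ((1 - s) * p.1 i + s * p.2 i - ((1 - t) * p.1 i + t * p.2 i)) *
        ((1 - s) * p.1 j + s * p.2 j - ((1 - t) * p.1 j + t * p.2 j))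
      = (t - s) ^ 2 * ((p.1 i - p.2 i) * (p.1 j - p.2 j))
    ring
  calc (∫ p : E2 d, (((fun p : E2 d => ((1 - s) • p.1 + s • p.2, (1 - t) • p.1 + t • p.2)) p).1 i
          - ((fun p : E2 d => ((1 - s) • p.1 + s • p.2, (1 - t) • p.1 + t • p.2)) p).2 i) *
          (((fun p : E2 d => ((1 - s) • p.1 + s • p.2, (1 - t) • p.1 + t • p.2)) p).1 j
          - ((fun p : E2 d => ((1 - s) • p.1 + s • p.2, (1 - t) • p.1 + t • p.2)) p).2 j) ∂π)
      = ∫ p : E2 d, (t - s) ^ 2 * ((p.1 i - p.2 i) * (p.1 j - p.2 j)) ∂π :=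
        integral_congr_ae (Filter.Eventually.of_forall fun p => e p)
    _ = (t - s) ^ 2 * ∫ p : E2 d, (p.1 i - p.2 i) * (p.1 j - p.2 j) ∂π :=
        integral_const_mul _ _

set_option maxHeartbeats 1000000 in
lemma lower_bound {d : ℕ} (k : ℕ) (hk : 1 ≤ k) (hkd : k ≤ d)
    (μ ν : Measure (Ed d)) [IsProbabilityMeasure μ] [IsProbabilityMeasure ν]
    (hμ : Integrable (fun x => ‖x‖ ^ 2) μ) (hν : Integrable (fun x => ‖x‖ ^ 2) ν)
    (πstar : Measure (E2 d)) (hπ : πstar ∈ couplings μ ν)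
    (hopt : ∀ π ∈ couplings μ ν,
      topEigSum k (Vpi πstar) (Vpi_isHermitian πstar) ≤
        topEigSum k (Vpi π) (Vpi_isHermitian π))
    {s t : ℝ} (hs : s ∈ Set.Icc (0:ℝ) 1) (ht : t ∈ Set.Icc (0:ℝ) 1) (hst : s ≤ t)
    (γ : Measure (E2 d))
    (hγ : γ ∈ couplings (πstar.map (fun p : E2 d => (1 - s) • p.1 + s • p.2))
      (πstar.map (fun p : E2 d => (1 - t) • p.1 + t • p.2))) :
    (t - s) ^ 2 * topEigSum k (Vpi πstar) (Vpi_isHermitian πstar)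
      ≤ topEigSum k (Vpi γ) (Vpi_isHermitian γ) := by
  classical
  obtain ⟨hπP, hπ1, hπ2⟩ := hπ
  obtain ⟨hγP, hγ1, hγ2⟩ := hγ
  haveI := hπP
  haveI := hγP
  set Sstar := topEigSum k (Vpi πstar) (Vpi_isHermitian πstar) with hSstar
  set fs : E2 d → Ed d := fun p => (1 - s) • p.1 + s • p.2 with hfs
  set ft : E2 d → Ed d := fun p => (1 - t) • p.1 + t • p.2 with hft
  have hfsc : Continuous fs := by rw [hfs]; fun_prop
  have hftc : Continuous ft := by rw [hft]; fun_prop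
  have hμs2 : Integrable (fun x => ‖x‖ ^ 2) (πstar.map fs) :=
    second_moment_interp πstar hπ1 hπ2 hμ hν hs
  have hμt2 : Integrable (fun x => ‖x‖ ^ 2) (πstar.map ft) :=
    second_moment_interp πstar hπ1 hπ2 hμ hν ht
  -- disintegrations
  set ρ₁ : Measure (Ed d × E2 d) := πstar.map (fun p => (fs p, p)) with hρ₁
  set ρ₂ : Measure (Ed d × E2 d) := πstar.map (fun p => (ft p, p)) with hρ₂
  haveI : IsProbabilityMeasure ρ₁ := Measure.isProbabilityMeasure_map (by fun_prop)
  haveI : IsProbabilityMeasure ρ₂ := Measure.isProbabilityMeasure_map (by fun_prop)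
  have hρ₁fst : ρ₁.fst = πstar.map fs := Measure.fst_map_prodMk measurable_id
  have hρ₂fst : ρ₂.fst = πstar.map ft := Measure.fst_map_prodMk measurable_id
  set κ₁ := ρ₁.condKernel with hκ₁
  set κ₂ := ρ₂.condKernel with hκ₂
  set κ := (κ₁.comap Prod.fst measurable_fst) ×ₖ (κ₂.comap Prod.snd measurable_snd) with hκ
  set M : Measure (E2 d × (E2 d × E2 d)) := γ ⊗ₘ κ with hM
  haveI : IsProbabilityMeasure M := by rw [hM]; infer_instance
  have hγfst : γ.fst = πstar.map fs := by rw [Measure.fst, hγ1]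
  have hγsnd : γ.snd = πstar.map ft := by rw [Measure.snd, hγ2]
  have hM1 : M.map (fun ω : E2 d × (E2 d × E2 d) => (ω.1.1, ω.2.1)) = ρ₁ := by
    rw [hM, hκ, glue_marg_fst, hγfst, ← hρ₁fst, hκ₁]
    exact ρ₁.disintegrate _
  have hM2 : M.map (fun ω : E2 d × (E2 d × E2 d) => (ω.1.2, ω.2.2)) = ρ₂ := by
    rw [hM, hκ, glue_marg_snd, hγsnd, ← hρ₂fst, hκ₂]
    exact ρ₂.disintegrate _
  have hMp : M.map (fun ω : E2 d × (E2 d × E2 d) => ω.2.1) = πstar := by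
    have h := congrArg (fun m : Measure (Ed d × E2 d) => m.map Prod.snd) hM1
    rw [Measure.map_map measurable_snd (by fun_prop), hρ₁,
      Measure.map_map measurable_snd (by fun_prop)] at h
    have e1 : (Prod.snd ∘ fun ω : E2 d × (E2 d × E2 d) => (ω.1.1, ω.2.1))
        = fun ω : E2 d × (E2 d × E2 d) => ω.2.1 := rfl
    have e2 : (Prod.snd ∘ fun p : E2 d => (fs p, p)) = id := rfl
    rw [e1, e2, Measure.map_id] at h
    exact h
  have hMq : M.map (fun ω : E2 d × (E2 d × E2 d) => ω.2.2) = πstar := by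
    have h := congrArg (fun m : Measure (Ed d × E2 d) => m.map Prod.snd) hM2
    rw [Measure.map_map measurable_snd (by fun_prop), hρ₂,
      Measure.map_map measurable_snd (by fun_prop)] at h
    have e1 : (Prod.snd ∘ fun ω : E2 d × (E2 d × E2 d) => (ω.1.2, ω.2.2))
        = fun ω : E2 d × (E2 d × E2 d) => ω.2.2 := rfl
    have e2 : (Prod.snd ∘ fun p : E2 d => (ft p, p)) = id := rfl
    rw [e1, e2, Measure.map_id] at h
    exact h
  have hMγ : M.map Prod.fst = γ := by
    rw [show M.map Prod.fst = M.fst from rfl, hM, Measure.fst_compProd]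
  have hprojp : AEMeasurable (fun ω : E2 d × (E2 d × E2 d) => ω.2.1) M :=
    (measurable_fst.comp measurable_snd).aemeasurable
  have hprojq : AEMeasurable (fun ω : E2 d × (E2 d × E2 d) => ω.2.2) M :=
    (measurable_snd.comp measurable_snd).aemeasurable
  -- a.e. identities
  have hae1 : ∀ᵐ ω ∂M, ω.1.1 = fs ω.2.1 := by
    have hGm : MeasurableSet {q : Ed d × E2 d | q.1 ≠ fs q.2} :=
      ((isClosed_eq continuous_fst (hfsc.comp continuous_snd)).measurableSet).compl
    have hρG : ρ₁ {q : Ed d × E2 d | q.1 ≠ fs q.2} = 0 := by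
      rw [hρ₁, Measure.map_apply (by fun_prop) hGm]
      have e0 : ((fun p : E2 d => (fs p, p)) ⁻¹' {q : Ed d × E2 d | q.1 ≠ fs q.2}) = ∅ := by
        ext p
        simp
      rw [e0]
      exact measure_empty
    rw [ae_iff]
    have e : {ω : E2 d × (E2 d × E2 d) | ¬ ω.1.1 = fs ω.2.1}
        = (fun ω : E2 d × (E2 d × E2 d) => (ω.1.1, ω.2.1)) ⁻¹' {q | q.1 ≠ fs q.2} := rfl
    rw [e, ← Measure.map_apply (by fun_prop) hGm, hM1]
    exact hρG
  have hae2 : ∀ᵐ ω ∂M, ω.1.2 = ft ω.2.2 := by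
    have hGm : MeasurableSet {q : Ed d × E2 d | q.1 ≠ ft q.2} :=
      ((isClosed_eq continuous_fst (hftc.comp continuous_snd)).measurableSet).compl
    have hρG : ρ₂ {q : Ed d × E2 d | q.1 ≠ ft q.2} = 0 := by
      rw [hρ₂, Measure.map_apply (by fun_prop) hGm]
      have e0 : ((fun p : E2 d => (ft p, p)) ⁻¹' {q : Ed d × E2 d | q.1 ≠ ft q.2}) = ∅ := by
        ext p
        simp
      rw [e0]
      exact measure_empty
    rw [ae_iff]
    have e : {ω : E2 d × (E2 d × E2 d) | ¬ ω.1.2 = ft ω.2.2}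
        = (fun ω : E2 d × (E2 d × E2 d) => (ω.1.2, ω.2.2)) ⁻¹' {q | q.1 ≠ ft q.2} := rfl
    rw [e, ← Measure.map_apply (by fun_prop) hGm, hM2]
    exact hρG
  -- random vectors
  set X : E2 d × (E2 d × E2 d) → Fin d → ℝ := fun ω i => s * (ω.2.1.1 i - ω.2.1.2 i) with hX
  set Y : E2 d × (E2 d × E2 d) → Fin d → ℝ := fun ω i => ω.1.1 i - ω.1.2 i with hY
  set W : E2 d × (E2 d × E2 d) → Fin d → ℝ :=
    fun ω i => (1 - t) * (ω.2.2.1 i - ω.2.2.2 i) with hW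
  have hπL2 : ∀ i, MemLp (fun p : E2 d => p.1 i - p.2 i) 2 πstar := fun i =>
    (memL2_coord_fst πstar hπ1 hμ i).sub (memL2_coord_snd πstar hπ2 hν i)
  have hγL2 : ∀ i, MemLp (fun p : E2 d => p.1 i - p.2 i) 2 γ := fun i =>
    (memL2_coord_fst γ hγ1 hμs2 i).sub (memL2_coord_snd γ hγ2 hμt2 i)
  have hcont2 : ∀ i : Fin d, Continuous fun p : E2 d => p.1 i - p.2 i := fun i =>
    ((continuous_coord i).comp continuous_fst).sub ((continuous_coord i).comp continuous_snd)
  have hXL2 : L2v M X := by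
    intro i
    have hg : MemLp (fun p : E2 d => s * (p.1 i - p.2 i)) 2 πstar := (hπL2 i).const_mul s
    rw [← hMp] at hg
    exact (memLp_map_measure_iff
      (((hcont2 i).const_smul s).aestronglyMeasurable) (by fun_prop)).1 hg
  have hYL2 : L2v M Y := by
    intro i
    have hg : MemLp (fun p : E2 d => p.1 i - p.2 i) 2 γ := hγL2 i
    rw [← hMγ] at hg
    exact (memLp_map_measure_iff ((hcont2 i).aestronglyMeasurable) (by fun_prop)).1 hg
  have hWL2 : L2v M W := by
    intro i
    have hg : MemLp (fun p : E2 d => (1 - t) * (p.1 i - p.2 i)) 2 πstar :=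
      (hπL2 i).const_mul (1 - t)
    rw [← hMq] at hg
    exact (memLp_map_measure_iff
      (((hcont2 i).const_smul (1 - t)).aestronglyMeasurable) (by fun_prop)).1 hg
  -- covariance identities
  have hcovX : covMat M X X = (s ^ 2) • Vpi πstar := by
    ext i j
    show (∫ ω, X ω i * X ω j ∂M)
      = s ^ 2 * (∫ p : E2 d, (p.1 i - p.2 i) * (p.1 j - p.2 j) ∂πstar)
    have h1 : (∫ ω, X ω i * X ω j ∂M)
        = ∫ p : E2 d, (s * (p.1 i - p.2 i)) * (s * (p.1 j - p.2 j)) ∂πstar := by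
      rw [← hMp, integral_map hprojp
        ((by fun_prop : Continuous fun p : E2 d =>
          (s * (p.1 i - p.2 i)) * (s * (p.1 j - p.2 j))).aestronglyMeasurable)]
    rw [h1]
    have e : ∀ p : E2 d, (s * (p.1 i - p.2 i)) * (s * (p.1 j - p.2 j))
        = s ^ 2 * ((p.1 i - p.2 i) * (p.1 j - p.2 j)) := fun p => by ring
    simp_rw [e]
    exact integral_const_mul _ _
  have hcovW : covMat M W W = ((1 - t) ^ 2) • Vpi πstar := by
    ext i j
    show (∫ ω, W ω i * W ω j ∂M)
      = (1 - t) ^ 2 * (∫ p : E2 d, (p.1 i - p.2 i) * (p.1 j - p.2 j) ∂πstar)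
    have h1 : (∫ ω, W ω i * W ω j ∂M)
        = ∫ p : E2 d, ((1 - t) * (p.1 i - p.2 i)) * ((1 - t) * (p.1 j - p.2 j)) ∂πstar := by
      rw [← hMq, integral_map hprojq
        ((by fun_prop : Continuous fun p : E2 d =>
          ((1 - t) * (p.1 i - p.2 i)) * ((1 - t) * (p.1 j - p.2 j))).aestronglyMeasurable)]
    rw [h1]
    have e : ∀ p : E2 d, ((1 - t) * (p.1 i - p.2 i)) * ((1 - t) * (p.1 j - p.2 j))
        = (1 - t) ^ 2 * ((p.1 i - p.2 i) * (p.1 j - p.2 j)) := fun p => by ring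
    simp_rw [e]
    exact integral_const_mul _ _
  have hcovY : covMat M Y Y = Vpi γ := by
    ext i j
    show (∫ ω, Y ω i * Y ω j ∂M)
      = ∫ p : E2 d, (p.1 i - p.2 i) * (p.1 j - p.2 j) ∂γ
    rw [← hMγ, integral_map measurable_fst.aemeasurable
      ((cont_VpiIntegrand i j).aestronglyMeasurable)]
  -- the induced coupling of μ and ν
  set πt : Measure (E2 d) := M.map (fun ω => (ω.2.1.1, ω.2.2.2)) with hπt
  haveI : IsProbabilityMeasure πt := by rw [hπt]; exact Measure.isProbabilityMeasure_map (by fun_prop)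
  have hπtcpl : πt ∈ couplings μ ν := by
    refine ⟨by infer_instance, ?_, ?_⟩
    · rw [hπt, Measure.map_map measurable_fst (by fun_prop)]
      have e : (Prod.fst ∘ fun ω : E2 d × (E2 d × E2 d) => (ω.2.1.1, ω.2.2.2))
          = (Prod.fst ∘ fun ω : E2 d × (E2 d × E2 d) => ω.2.1) := rfl
      rw [e, ← Measure.map_map measurable_fst (by fun_prop), hMp]
      exact hπ1
    · rw [hπt, Measure.map_map measurable_snd (by fun_prop)]
      have e : (Prod.snd ∘ fun ω : E2 d × (E2 d × E2 d) => (ω.2.1.1, ω.2.2.2))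
          = (Prod.snd ∘ fun ω : E2 d × (E2 d × E2 d) => ω.2.2) := rfl
      rw [e, ← Measure.map_map measurable_snd (by fun_prop), hMq]
      exact hπ2
  have haekey : ∀ᵐ ω ∂M, ∀ i : Fin d, (X + Y + W) ω i = ω.2.1.1 i - ω.2.2.2 i := by
    filter_upwards [hae1, hae2] with ω h1 h2
    intro i
    have c1 : ω.1.1 i = (1 - s) * ω.2.1.1 i + s * ω.2.1.2 i := by rw [h1]; rfl
    have c2 : ω.1.2 i = (1 - t) * ω.2.2.1 i + t * ω.2.2.2 i := by rw [h2]; rfl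
    show s * (ω.2.1.1 i - ω.2.1.2 i) + (ω.1.1 i - ω.1.2 i)
        + (1 - t) * (ω.2.2.1 i - ω.2.2.2 i) = ω.2.1.1 i - ω.2.2.2 i
    rw [c1, c2]
    ring
  have hcovSum : covMat M (X + Y + W) (X + Y + W) = Vpi πt := by
    ext i j
    show (∫ ω, (X + Y + W) ω i * (X + Y + W) ω j ∂M)
      = Vpi πt i j
    have h1 : Vpi πt i j
        = ∫ ω, (ω.2.1.1 i - ω.2.2.2 i) * (ω.2.1.1 j - ω.2.2.2 j) ∂M := by
      show (∫ p : E2 d, (p.1 i - p.2 i) * (p.1 j - p.2 j) ∂πt) = _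
      rw [hπt, integral_map
        ((show Measurable fun ω : E2 d × (E2 d × E2 d) => (ω.2.1.1, ω.2.2.2) by
          fun_prop).aemeasurable)
        ((cont_VpiIntegrand i j).aestronglyMeasurable)]
    rw [h1]
    refine integral_congr_ae ?_
    filter_upwards [haekey] with ω h
    rw [h i, h j]
  -- Ky Fan and Minkowski chain
  obtain ⟨Z, hZpsd, hZ1, hZtr, hZeq⟩ := kyFan_attained hk hkd (Vpi_isHermitian πt)
  have hXYL2 : L2v M (X + Y) := fun i => ((hXL2 i).add (hYL2 i))
  have hXYWL2 : L2v M (X + Y + W) := fun i => ((hXYL2 i).add (hWL2 i))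
  have hTγ0 : 0 ≤ topEigSum k (Vpi γ) (Vpi_isHermitian γ) := by
    obtain ⟨Z', hZ', _, _, hZeq'⟩ := kyFan_attained hk hkd (Vpi_isHermitian γ)
    rw [← hZeq', Vpi_eq_covMat]
    exact frob_cov_nonneg γ hZ' (fun i => hγL2 i)
  have hS0 : 0 ≤ Sstar := by
    obtain ⟨Z', hZ', _, _, hZeq'⟩ := kyFan_attained hk hkd (Vpi_isHermitian πstar)
    rw [hSstar, ← hZeq', Vpi_eq_covMat]
    exact frob_cov_nonneg πstar hZ' (fun i => hπL2 i)
  have step1 : Real.sqrt Sstar ≤ Real.sqrt (frob Z (covMat M (X + Y + W) (X + Y + W))) := by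
    rw [hcovSum, hZeq]
    exact Real.sqrt_le_sqrt (hopt πt hπtcpl)
  have step2 : Real.sqrt (frob Z (covMat M (X + Y + W) (X + Y + W)))
      ≤ Real.sqrt (frob Z (covMat M X X)) + Real.sqrt (frob Z (covMat M Y Y))
        + Real.sqrt (frob Z (covMat M W W)) := by
    calc Real.sqrt (frob Z (covMat M (X + Y + W) (X + Y + W)))
        ≤ Real.sqrt (frob Z (covMat M (X + Y) (X + Y)))
          + Real.sqrt (frob Z (covMat M W W)) := frob_cov_minkowski M hZpsd hXYL2 hWL2
      _ ≤ _ := by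
          have h := frob_cov_minkowski M hZpsd hXL2 hYL2
          have h0 := Real.sqrt_nonneg (frob Z (covMat M W W))
          linarith
  have hXbound : Real.sqrt (frob Z (covMat M X X)) ≤ s * Real.sqrt Sstar := by
    rw [hcovX]
    have h1 : frob Z ((s ^ 2) • Vpi πstar) = s ^ 2 * frob Z (Vpi πstar) := frob_smul _ _ _
    have h2 : frob Z (Vpi πstar) ≤ Sstar :=
      kyFan_upper hk hkd (Vpi_isHermitian πstar) hZpsd hZ1 hZtr
    calc Real.sqrt (frob Z ((s ^ 2) • Vpi πstar)) ≤ Real.sqrt (s ^ 2 * Sstar) := by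
          apply Real.sqrt_le_sqrt
          rw [h1]
          nlinarith [sq_nonneg s]
      _ = s * Real.sqrt Sstar := by
          rw [Real.sqrt_mul (sq_nonneg s), Real.sqrt_sq hs.1]
  have hWbound : Real.sqrt (frob Z (covMat M W W)) ≤ (1 - t) * Real.sqrt Sstar := by
    rw [hcovW]
    have h1 : frob Z (((1 - t) ^ 2) • Vpi πstar) = (1 - t) ^ 2 * frob Z (Vpi πstar) :=
      frob_smul _ _ _
    have h2 : frob Z (Vpi πstar) ≤ Sstar :=
      kyFan_upper hk hkd (Vpi_isHermitian πstar) hZpsd hZ1 hZtr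
    calc Real.sqrt (frob Z (((1 - t) ^ 2) • Vpi πstar)) ≤ Real.sqrt ((1 - t) ^ 2 * Sstar) := by
          apply Real.sqrt_le_sqrt
          rw [h1]
          nlinarith [sq_nonneg (1 - t)]
      _ = (1 - t) * Real.sqrt Sstar := by
          rw [Real.sqrt_mul (sq_nonneg (1 - t)), Real.sqrt_sq (by linarith [ht.2])]
  have hYbound : Real.sqrt (frob Z (covMat M Y Y))
      ≤ Real.sqrt (topEigSum k (Vpi γ) (Vpi_isHermitian γ)) := by
    rw [hcovY]
    exact Real.sqrt_le_sqrt (kyFan_upper hk hkd (Vpi_isHermitian γ) hZpsd hZ1 hZtr)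
  have final : (t - s) * Real.sqrt Sstar
      ≤ Real.sqrt (topEigSum k (Vpi γ) (Vpi_isHermitian γ)) := by linarith
  calc (t - s) ^ 2 * Sstar = ((t - s) * Real.sqrt Sstar) ^ 2 := by
        rw [mul_pow, Real.sq_sqrt hS0]
    _ ≤ (Real.sqrt (topEigSum k (Vpi γ) (Vpi_isHermitian γ))) ^ 2 :=
        pow_le_pow_left₀ (mul_nonneg (by linarith) (Real.sqrt_nonneg _)) final 2
    _ = topEigSum k (Vpi γ) (Vpi_isHermitian γ) := Real.sq_sqrt hTγ0

set_option maxHeartbeats 1000000 in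
lemma SRW_key {d : ℕ} (k : ℕ) (hk : 1 ≤ k) (hkd : k ≤ d)
    (μ ν : Measure (Ed d)) [IsProbabilityMeasure μ] [IsProbabilityMeasure ν]
    (hμ : Integrable (fun x => ‖x‖ ^ 2) μ) (hν : Integrable (fun x => ‖x‖ ^ 2) ν)
    (πstar : Measure (E2 d)) (hπ : πstar ∈ couplings μ ν)
    (hopt : ∀ π ∈ couplings μ ν,
      topEigSum k (Vpi πstar) (Vpi_isHermitian πstar) ≤
        topEigSum k (Vpi π) (Vpi_isHermitian π))
    {s t : ℝ} (hs : s ∈ Set.Icc (0:ℝ) 1) (ht : t ∈ Set.Icc (0:ℝ) 1) (hst : s ≤ t) :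
    Real.sqrt (SRWsq k
        (πstar.map (fun p : Ed d × Ed d => (1 - s) • p.1 + s • p.2))
        (πstar.map (fun p : Ed d × Ed d => (1 - t) • p.1 + t • p.2))) =
      |t - s| * Real.sqrt (SRWsq k μ ν) := by
  classical
  haveI := hπ.1
  set Sstar := topEigSum k (Vpi πstar) (Vpi_isHermitian πstar) with hSstar
  have hS : SRWsq k μ ν = Sstar := by
    refine le_antisymm (csInf_le ⟨Sstar, ?_⟩ ⟨πstar, hπ, rfl⟩) (le_csInf ⟨_, ⟨πstar, hπ, rfl⟩⟩ ?_)
    · rintro b ⟨π', hπ', rfl⟩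
      exact hopt π' hπ'
    · rintro b ⟨π', hπ', rfl⟩
      exact hopt π' hπ'
  set πst : Measure (E2 d) := πstar.map
    (fun p : E2 d => ((1 - s) • p.1 + s • p.2, (1 - t) • p.1 + t • p.2)) with hπst
  haveI : IsProbabilityMeasure πst := by rw [hπst]; exact Measure.isProbabilityMeasure_map (by fun_prop)
  have hcplst : πst ∈ couplings (πstar.map (fun p : E2 d => (1 - s) • p.1 + s • p.2))
      (πstar.map (fun p : E2 d => (1 - t) • p.1 + t • p.2)) := by
    refine ⟨by infer_instance, ?_, ?_⟩
    · rw [hπst, Measure.map_map measurable_fst (by fun_prop)]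
      rfl
    · rw [hπst, Measure.map_map measurable_snd (by fun_prop)]
      rfl
  have hVst : Vpi πst = ((t - s) ^ 2) • Vpi πstar := by
    rw [hπst]
    exact Vpi_interp πstar s t
  have hsm : (((t - s) ^ 2) • Vpi πstar).IsHermitian := by
    rw [← hVst]
    exact Vpi_isHermitian _
  have hval : topEigSum k (Vpi πst) (Vpi_isHermitian πst) = (t - s) ^ 2 * Sstar := by
    rw [topEigSum_congr k (Vpi_isHermitian πst) hsm hVst]
    exact topEigSum_smul hk hkd (Vpi_isHermitian πstar) (sq_nonneg _) hsm
  have hLB : ∀ b ∈ ((fun π => topEigSum k (Vpi π) (Vpi_isHermitian π)) ''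
      couplings (πstar.map (fun p : E2 d => (1 - s) • p.1 + s • p.2))
        (πstar.map (fun p : E2 d => (1 - t) • p.1 + t • p.2))),
      (t - s) ^ 2 * Sstar ≤ b := by
    rintro b ⟨γ, hγ, rfl⟩
    exact lower_bound k hk hkd μ ν hμ hν πstar hπ hopt hs ht hst γ hγ
  have hEq : SRWsq k (πstar.map (fun p : E2 d => (1 - s) • p.1 + s • p.2))
      (πstar.map (fun p : E2 d => (1 - t) • p.1 + t • p.2)) = (t - s) ^ 2 * Sstar := by
    refine le_antisymm ?_ (le_csInf ⟨_, ⟨πst, hcplst, rfl⟩⟩ hLB)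
    rw [SRWsq, ← hval]
    exact csInf_le ⟨(t - s) ^ 2 * Sstar, hLB⟩ ⟨πst, hcplst, rfl⟩
  rw [hEq, hS, Real.sqrt_mul (sq_nonneg _), Real.sqrt_sq_eq_abs]


/-- McCann interpolation along an optimal plan is a constant-speed geodesic for `S_k`:
with `μ_t = (f_t)_#π*`, `f_t(x,y) = (1−t)x + ty`, one has
`S_k(μ_s, μ_t) = |t − s| · S_k(μ, ν)` for all `s, t ∈ [0,1]`. -/
theorem SRW_geodesic {d : ℕ} (k : ℕ) (hk : 1 ≤ k) (hkd : k ≤ d)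
    (μ ν : Measure (Ed d)) [IsProbabilityMeasure μ] [IsProbabilityMeasure ν]
    (hμ : Integrable (fun x => ‖x‖ ^ 2) μ) (hν : Integrable (fun x => ‖x‖ ^ 2) ν)
    (πstar : Measure (Ed d × Ed d)) (hπ : πstar ∈ couplings μ ν)
    (hopt : ∀ π ∈ couplings μ ν,
      topEigSum k (Vpi πstar) (Vpi_isHermitian πstar) ≤
        topEigSum k (Vpi π) (Vpi_isHermitian π)) :
    ∀ s ∈ Set.Icc (0:ℝ) 1, ∀ t ∈ Set.Icc (0:ℝ) 1,
      Real.sqrt (SRWsq k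
          (πstar.map (fun p : Ed d × Ed d => (1 - s) • p.1 + s • p.2))
          (πstar.map (fun p : Ed d × Ed d => (1 - t) • p.1 + t • p.2))) =
        |t - s| * Real.sqrt (SRWsq k μ ν) := by
  intro s hs t ht
  rcases le_total s t with hst | hst
  · exact SRW_key k hk hkd μ ν hμ hν πstar hπ hopt hs ht hst
  · rw [SRWsq_comm, abs_sub_comm]
    exact SRW_key k hk hkd μ ν hμ hν πstar hπ hopt ht hs hst
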